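/- Let G be a 2-connected outerplanar graph on at least 6 vertices, and let v be a vertex of G of degree 2 with neighbours w1 and w2. Then every connected triple containing v also contains w1 or w2, and there is no other vertex v' ∉ {v, w1, w2} such that every connected triple containing v' also contains w1 or w2. -/

import Mathlib

open SimpleGraph

/-- `H` is a minor of `G`: there is a family of nonempty, pairwise disjoint, connected
branch sets in `G`, one for each vertex of `H`, with edges of `H` realised by edges of `G`. -/
def IsMinor {W V : Type*} (H : SimpleGraph W) (G : SimpleGraph V) : Prop :=
  ∃ f : W → Set V,
    (∀ w, (f w).Nonempty) ∧
    (∀ w, (G.induce (f w)).Connected) ∧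
    (∀ w w', w ≠ w' → Disjoint (f w) (f w')) ∧
    (∀ w w', H.Adj w w' → ∃ a ∈ f w, ∃ b ∈ f w', G.Adj a b)

/-- A graph is outerplanar iff it has neither a `K₄` nor a `K_{2,3}` minor. -/
def Outerplanar {V : Type*} (G : SimpleGraph V) : Prop :=
  ¬ IsMinor (completeGraph (Fin 4)) G ∧
  ¬ IsMinor (completeBipartiteGraph (Fin 2) (Fin 3)) G

/-- A graph is 2-connected: more than two vertices and removing any vertex leaves
a connected graph. -/
def TwoConnected {V : Type*} [Fintype V] (G : SimpleGraph V) : Prop :=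
  2 < Fintype.card V ∧ ∀ v : V, (G.induce {u | u ≠ v}).Connected

private lemma boundary {W : Type*} {H : SimpleGraph W} {A : Set W} {x y : W}
    (p : H.Walk x y) : x ∈ A → y ∉ A → ∃ a ∈ A, ∃ b, b ∉ A ∧ H.Adj a b := by
  induction p with
  | nil => exact fun hx hy => absurd hx hy
  | @cons u z w h q ih =>
    intro hx hy
    by_cases hz : z ∈ A
    · exact ih hz hy
    · exact ⟨_, hx, _, hz, h⟩

private lemma singleton_connected {W : Type*} (H : SimpleGraph W) (x : W) :
    (H.induce {x}).Connected := by
  rw [connected_iff]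
  refine ⟨fun a b => ?_, ⟨⟨x, rfl⟩⟩⟩
  have : a = b := Subtype.ext (a.2.trans b.2.symm)
  exact this ▸ Reachable.refl a

private lemma reach_set_connected {V : Type*} (G : SimpleGraph V) (T : Set V) (a : ↥T) :
    (G.induce (Subtype.val '' {x : ↥T | (G.induce T).Reachable a x})).Connected := by
  refine G.induce_connected_of_patches (↑a) ⟨a, Reachable.refl a, rfl⟩ ?_
  rintro x ⟨⟨x', hx'T⟩, hreach, rfl⟩
  obtain ⟨p⟩ := hreach
  let pm := p.map (SimpleGraph.Embedding.induce T).toHom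
  refine ⟨{w | w ∈ pm.support}, ?_, pm.start_mem_support, pm.end_mem_support,
    (pm.connected_induce_support).preconnected _ _⟩
  intro w hw
  simp only [Set.mem_setOf_eq, pm, Walk.support_map, List.mem_map] at hw
  obtain ⟨x0, hx0, rfl⟩ := hw
  obtain ⟨q, r, _⟩ := Walk.mem_support_iff_exists_append.mp hx0
  exact ⟨x0, ⟨q⟩, rfl⟩

private lemma triple_connected {V : Type*} (G : SimpleGraph V) {a b c : V}
    (hab : G.Adj a b) (hc : G.Adj a c ∨ G.Adj b c) :
    (G.induce {a, b, c}).Connected := by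
  have hset : ({a, b, c} : Set V) = {a, b} ∪ {c} := by
    ext x; simp only [Set.mem_insert_iff, Set.mem_singleton_iff, Set.mem_union]; tauto
  rw [hset]
  rcases hc with hc | hc
  · exact connected_induce_union (induce_pair_connected_of_adj hab).preconnected
      (singleton_connected G c).preconnected (Set.mem_insert a {b}) rfl hc
  · exact connected_induce_union (induce_pair_connected_of_adj hab).preconnected
      (singleton_connected G c).preconnected (Set.mem_insert_of_mem a rfl) rfl hc

theorem stmt12 {V : Type*} [Fintype V] (G : SimpleGraph V)
    (h2 : TwoConnected G) (hop : Outerplanar G) (hcard : 6 ≤ Fintype.card V)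
    (v w1 w2 : V) (hw : w1 ≠ w2) (hnbr : G.neighborSet v = {w1, w2}) :
    (∀ S : Finset V, S.card = 3 → (G.induce (S : Set V)).Connected → v ∈ S →
      (w1 ∈ S ∨ w2 ∈ S)) ∧
    ¬ ∃ v', v' ∉ ({v, w1, w2} : Set V) ∧
      ∀ S : Finset V, S.card = 3 → (G.induce (S : Set V)).Connected → v' ∈ S →
        (w1 ∈ S ∨ w2 ∈ S) := by
  classical
  have hvw1 : G.Adj v w1 := by
    have : w1 ∈ G.neighborSet v := by rw [hnbr]; exact Set.mem_insert _ _
    exact this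
  have hvw2 : G.Adj v w2 := by
    have : w2 ∈ G.neighborSet v := by rw [hnbr]; exact Set.mem_insert_of_mem _ rfl
    exact this
  have hadj_v : ∀ x : V, G.Adj v x → x = w1 ∨ x = w2 := by
    intro x hx
    have : x ∈ G.neighborSet v := hx
    rw [hnbr] at this
    exact this
  constructor
  · -- Part 1
    intro S hS3 hconn hvS
    have hvS' : v ∈ (S : Set V) := hvS
    have hex : ∃ u ∈ S, u ≠ v := by
      by_contra h
      push_neg at h
      have hsub : S ⊆ {v} := fun x hx => Finset.mem_singleton.mpr (h x hx)
      have := Finset.card_le_card hsub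
      simp [hS3] at this
    obtain ⟨u, huS, huv⟩ := hex
    obtain ⟨p⟩ := hconn.preconnected ⟨v, hvS'⟩ ⟨u, huS⟩
    obtain ⟨a, ha, b, hb, hadj⟩ := boundary (A := {x : ↥(S : Set V) | (x : V) = v}) p rfl huv
    have hGadj : G.Adj (a : V) (b : V) := hadj
    rw [ha] at hGadj
    rcases hadj_v _ hGadj with h1 | h1
    · exact Or.inl (by rw [← h1]; exact b.2)
    · exact Or.inr (by rw [← h1]; exact b.2)
  · -- Part 2
    rintro ⟨v', hv', hall⟩
    set T : Set V := {u | u ≠ v ∧ u ≠ w1 ∧ u ≠ w2} with hT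
    have hv'T : v' ∈ T := by
      simp only [Set.mem_insert_iff, Set.mem_singleton_iff, not_or] at hv'
      exact ⟨hv'.1, hv'.2.1, hv'.2.2⟩
    -- component sets
    let Aset : ↥T → Set V := fun c => Subtype.val '' {x : ↥T | (G.induce T).Reachable c x}
    have memA : ∀ c : ↥T, (c : V) ∈ Aset c := fun c => ⟨c, Reachable.refl c, rfl⟩
    have AsubT : ∀ c : ↥T, Aset c ⊆ T := by
      rintro c x ⟨x', _, rfl⟩; exact x'.2
    have hclosed : ∀ (c : ↥T) (x : V), x ∈ Aset c → ∀ z, z ∈ T → G.Adj x z → z ∈ Aset c := by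
      rintro c x ⟨x', hx', rfl⟩ z hz hxz
      have hadj' : (G.induce T).Adj x' ⟨z, hz⟩ := hxz
      exact ⟨⟨z, hz⟩, hx'.trans hadj'.reachable, rfl⟩
    -- w1 is adjacent to every component
    have key1 : ∀ c : ↥T, ∃ x ∈ Aset c, G.Adj w1 x := by
      intro c
      have hc2 : (c : V) ≠ w2 := c.2.2.2
      obtain ⟨p⟩ := (h2.2 w2).preconnected ⟨(c : V), hc2⟩ ⟨w1, hw⟩
      have hw1A : w1 ∉ Aset c := fun h => (AsubT c h).2.1 rfl
      obtain ⟨a, ha, b, hb, hadj⟩ :=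
        boundary (A := {x : {u : V | u ≠ w2} | (x : V) ∈ Aset c}) p (memA c) hw1A
      have hGadj : G.Adj (a : V) (b : V) := hadj
      by_cases hbT : (b : V) ∈ T
      · exact absurd (hclosed c _ ha _ hbT hGadj) hb
      · simp only [hT, Set.mem_setOf_eq, not_and_or, not_not] at hbT
        rcases hbT with h1 | h1 | h1
        · exfalso
          have : G.Adj v (a : V) := (h1 ▸ hGadj).symm
          rcases hadj_v _ this with h2 | h2
          · exact (AsubT c ha).2.1 h2
          · exact (AsubT c ha).2.2 h2
        · exact ⟨a, ha, (h1 ▸ hGadj).symm⟩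
        · exact absurd h1 b.2
    have key2 : ∀ c : ↥T, ∃ x ∈ Aset c, G.Adj w2 x := by
      intro c
      have hc1 : (c : V) ≠ w1 := c.2.2.1
      obtain ⟨p⟩ := (h2.2 w1).preconnected ⟨(c : V), hc1⟩ ⟨w2, Ne.symm hw⟩
      have hw2A : w2 ∉ Aset c := fun h => (AsubT c h).2.2 rfl
      obtain ⟨a, ha, b, hb, hadj⟩ :=
        boundary (A := {x : {u : V | u ≠ w1} | (x : V) ∈ Aset c}) p (memA c) hw2A
      have hGadj : G.Adj (a : V) (b : V) := hadj
      by_cases hbT : (b : V) ∈ T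
      · exact absurd (hclosed c _ ha _ hbT hGadj) hb
      · simp only [hT, Set.mem_setOf_eq, not_and_or, not_not] at hbT
        rcases hbT with h1 | h1 | h1
        · exfalso
          have : G.Adj v (a : V) := (h1 ▸ hGadj).symm
          rcases hadj_v _ this with h2 | h2
          · exact (AsubT c ha).2.1 h2
          · exact (AsubT c ha).2.2 h2
        · exact absurd h1 b.2
        · exact ⟨a, ha, (h1 ▸ hGadj).symm⟩
    -- T is connected
    have hTconn : (G.induce T).Connected := by
      by_contra hnc
      have hpre : ¬ (G.induce T).Preconnected := by
        intro h
        exact hnc ((connected_iff _).mpr ⟨h, ⟨⟨v', hv'T⟩⟩⟩)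
      rw [Preconnected] at hpre
      push_neg at hpre
      obtain ⟨a, b, hab⟩ := hpre
      have hdisj : Disjoint (Aset a) (Aset b) := by
        rw [Set.disjoint_left]
        rintro x ⟨x1, hx1, rfl⟩ ⟨x2, hx2, hx12⟩
        exact hab (hx1.trans ((Subtype.ext hx12 : x2 = x1) ▸ hx2).symm)
      -- build a K_{2,3} minor
      have hw1T : w1 ∉ T := fun h => h.2.1 rfl
      have hw2T : w2 ∉ T := fun h => h.2.2 rfl
      have hvT : v ∉ T := fun h => h.1 rfl
      have dS : ∀ (x : V), x ∉ T → ∀ c : ↥T, Disjoint ({x} : Set V) (Aset c) := by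
        intro x hx c
        rw [Set.disjoint_singleton_left]
        exact fun h => hx (AsubT c h)
      have d12 : Disjoint ({w1} : Set V) ({w2} : Set V) := Set.disjoint_singleton.mpr hw
      have d1v : Disjoint ({w1} : Set V) ({v} : Set V) :=
        Set.disjoint_singleton.mpr (fun h => hvw1.ne h.symm)
      have d2v : Disjoint ({w2} : Set V) ({v} : Set V) :=
        Set.disjoint_singleton.mpr (fun h => hvw2.ne h.symm)
      apply hop.2
      refine ⟨Sum.elim (fun i : Fin 2 => if i.val = 0 then ({w1} : Set V) else {w2})
        (fun j : Fin 3 => if j.val = 0 then Aset a else if j.val = 1 then Aset b else {v}),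
        ?_, ?_, ?_, ?_⟩
      · rintro (⟨iv, hi⟩ | ⟨jv, hj⟩)
        · interval_cases iv
          · exact ⟨w1, rfl⟩
          · exact ⟨w2, rfl⟩
        · interval_cases jv
          · exact ⟨_, memA a⟩
          · exact ⟨_, memA b⟩
          · exact ⟨v, rfl⟩
      · rintro (⟨iv, hi⟩ | ⟨jv, hj⟩)
        · interval_cases iv
          · exact singleton_connected G w1
          · exact singleton_connected G w2
        · interval_cases jv
          · exact reach_set_connected G T a
          · exact reach_set_connected G T b
          · exact singleton_connected G v
      · rintro (⟨iv, hi⟩ | ⟨jv, hj⟩) (⟨iv', hi'⟩ | ⟨jv', hj'⟩) hne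
        · interval_cases iv <;> interval_cases iv' <;>
            first
              | exact absurd rfl hne
              | exact d12
              | exact d12.symm
        · interval_cases iv <;> interval_cases jv' <;>
            first
              | exact dS _ hw1T _
              | exact dS _ hw2T _
              | exact d1v
              | exact d2v
        · interval_cases jv <;> interval_cases iv' <;>
            first
              | exact (dS _ hw1T _).symm
              | exact (dS _ hw2T _).symm
              | exact d1v.symm
              | exact d2v.symm
        · interval_cases jv <;> interval_cases jv' <;>
            first
              | exact absurd rfl hne
              | exact hdisj
              | exact hdisj.symm
              | exact (dS _ hvT _).symm
              | exact dS _ hvT _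
      · obtain ⟨xa, hxa, hadjxa⟩ := key1 a
        obtain ⟨xb, hxb, hadjxb⟩ := key1 b
        obtain ⟨ya, hya, hadjya⟩ := key2 a
        obtain ⟨yb, hyb, hadjyb⟩ := key2 b
        rintro (⟨iv, hi⟩ | ⟨jv, hj⟩) (⟨iv', hi'⟩ | ⟨jv', hj'⟩) hadj
        · simp at hadj
        · interval_cases iv <;> interval_cases jv' <;>
            first
              | exact ⟨w1, rfl, xa, hxa, hadjxa⟩
              | exact ⟨w1, rfl, xb, hxb, hadjxb⟩
              | exact ⟨w1, rfl, v, rfl, hvw1.symm⟩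
              | exact ⟨w2, rfl, ya, hya, hadjya⟩
              | exact ⟨w2, rfl, yb, hyb, hadjyb⟩
              | exact ⟨w2, rfl, v, rfl, hvw2.symm⟩
        · interval_cases jv <;> interval_cases iv' <;>
            first
              | exact ⟨xa, hxa, w1, rfl, hadjxa.symm⟩
              | exact ⟨xb, hxb, w1, rfl, hadjxb.symm⟩
              | exact ⟨v, rfl, w1, rfl, hvw1⟩
              | exact ⟨ya, hya, w2, rfl, hadjya.symm⟩
              | exact ⟨yb, hyb, w2, rfl, hadjyb.symm⟩
              | exact ⟨v, rfl, w2, rfl, hvw2⟩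
        · simp at hadj
    -- getting extra vertices
    have hex : ∀ (s : Finset V), s.card ≤ 5 → ∃ u : V, u ∉ s := by
      intro s hs
      by_contra h
      push_neg at h
      have hsub : (Finset.univ : Finset V) ⊆ s := fun x _ => h x
      have := Finset.card_le_card hsub
      rw [Finset.card_univ] at this
      omega
    obtain ⟨y0, hy0⟩ := hex {v, w1, w2, v'} (by
      refine (Finset.card_insert_le _ _).trans (Nat.succ_le_succ ?_)
      refine (Finset.card_insert_le _ _).trans (Nat.succ_le_succ ?_)
      refine (Finset.card_insert_le _ _).trans (Nat.succ_le_succ ?_)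
      simp)
    simp only [Finset.mem_insert, Finset.mem_singleton, not_or] at hy0
    have hy0T : y0 ∈ T := ⟨hy0.1, hy0.2.1, hy0.2.2.1⟩
    have hy0v' : y0 ≠ v' := hy0.2.2.2
    -- first neighbour y of v' in T
    obtain ⟨p⟩ := hTconn.preconnected ⟨v', hv'T⟩ ⟨y0, hy0T⟩
    obtain ⟨a1, ha1, b1, hb1, hadj1⟩ :=
      boundary (A := {x : ↥T | (x : V) = v'}) p rfl hy0v'
    set y : V := (b1 : V) with hy
    have hyT : y ∈ T := b1.2
    have hyv' : y ≠ v' := hb1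
    have hG1 : G.Adj v' y := ha1 ▸ (hadj1 : G.Adj (a1 : V) (b1 : V))
    -- second vertex q
    obtain ⟨z0, hz0⟩ := hex {v, w1, w2, v', y} (by
      refine (Finset.card_insert_le _ _).trans (Nat.succ_le_succ ?_)
      refine (Finset.card_insert_le _ _).trans (Nat.succ_le_succ ?_)
      refine (Finset.card_insert_le _ _).trans (Nat.succ_le_succ ?_)
      refine (Finset.card_insert_le _ _).trans (Nat.succ_le_succ ?_)
      simp)
    simp only [Finset.mem_insert, Finset.mem_singleton, not_or] at hz0
    have hz0T : z0 ∈ T := ⟨hz0.1, hz0.2.1, hz0.2.2.1⟩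
    obtain ⟨p2⟩ := hTconn.preconnected ⟨v', hv'T⟩ ⟨z0, hz0T⟩
    obtain ⟨a2, ha2, b2, hb2, hadj2⟩ :=
      boundary (A := {x : ↥T | (x : V) = v' ∨ (x : V) = y}) p2 (Or.inl rfl)
        (by simp only [Set.mem_setOf_eq]; push_neg; exact ⟨hz0.2.2.2.1, hz0.2.2.2.2⟩)
    set q : V := (b2 : V) with hq
    have hqT : q ∈ T := b2.2
    simp only [Set.mem_setOf_eq, not_or] at hb2
    have hG2 : G.Adj v' q ∨ G.Adj y q := by
      rcases ha2 with h | h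
      · exact Or.inl (h ▸ (hadj2 : G.Adj (a2 : V) (b2 : V)))
      · exact Or.inr (h ▸ (hadj2 : G.Adj (a2 : V) (b2 : V)))
    -- the triple
    have hv'y : v' ≠ y := Ne.symm hyv'
    have hv'q : v' ≠ q := Ne.symm hb2.1
    have hyq : y ≠ q := Ne.symm hb2.2
    have hcard3 : ({v', y, q} : Finset V).card = 3 :=
      Finset.card_eq_three.mpr ⟨v', y, q, hv'y, hv'q, hyq, rfl⟩
    have hconn3 : (G.induce (({v', y, q} : Finset V) : Set V)).Connected := by
      have : (({v', y, q} : Finset V) : Set V) = ({v', y, q} : Set V) := by simp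
      rw [this]
      exact triple_connected G hG1 hG2
    have hmem : v' ∈ ({v', y, q} : Finset V) := by simp
    rcases hall _ hcard3 hconn3 hmem with h | h <;>
      simp only [Finset.mem_insert, Finset.mem_singleton] at h
    · rcases h with h | h | h
      · exact hv'T.2.1 h.symm
      · exact hyT.2.1 h.symm
      · exact hqT.2.1 h.symm
    · rcases h with h | h | h
      · exact hv'T.2.2 h.symm
      · exact hyT.2.2 h.symm
      · exact hqT.2.2 h.symm
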